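/- Löwner–Heinz inequality: If A and B are positive semidefinite Hermitian matrices with A ≥ B (i.e., A − B positive semidefinite) and 0 ≤ r ≤ 1, then Aʳ ≥ Bʳ. -/

import Mathlib

open MeasureTheory Set

noncomputable def lhI (r : ℝ) : ℝ := ∫ l in Ioi (0:ℝ), l ^ (r-1) / (1+l)

variable {r : ℝ}

lemma lh_integrable (hr0 : 0 < r) (hr1 : r < 1) (t : ℝ) (ht : 0 ≤ t) :
    IntegrableOn (fun l : ℝ => l ^ (r-1) * (t / (t + l))) (Ioi 0) := by
  rcases eq_or_lt_of_le ht with h0 | ht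
  · have : (fun l : ℝ => l ^ (r-1) * (t / (t + l))) = fun _ => 0 := by
      funext l; rw [← h0]; simp
    rw [this]; exact integrableOn_zero
  have hmeas : ∀ s ⊆ Ioi (0:ℝ), MeasurableSet s →
      AEStronglyMeasurable (fun l : ℝ => l ^ (r-1) * (t / (t + l))) (volume.restrict s) := by
    intro s hs hms
    refine ContinuousOn.aestronglyMeasurable ?_ hms
    refine ContinuousOn.mul ?_ (ContinuousOn.div continuousOn_const
      (continuousOn_const.add continuousOn_id) ?_)
    · exact fun l hl => (Real.continuousAt_rpow_const l _ (Or.inl (ne_of_gt (hs hl)))).continuousWithinAt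
    · intro l hl; have := hs hl; simp only [mem_Ioi] at this; positivity
  have h1 : IntegrableOn (fun l : ℝ => l ^ (r-1) * (t / (t + l))) (Ioc 0 1) := by
    have hg : IntegrableOn (fun l : ℝ => l ^ (r-1)) (Ioc 0 1) := by
      rw [integrableOn_Ioc_iff_integrableOn_Ioo]
      exact (intervalIntegral.integrableOn_Ioo_rpow_iff one_pos).mpr (by linarith)
    refine Integrable.mono' hg (hmeas _ Ioc_subset_Ioi_self measurableSet_Ioc) ?_
    filter_upwards [ae_restrict_mem measurableSet_Ioc] with l hl
    have hl0 : 0 < l := hl.1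
    rw [Real.norm_eq_abs, abs_of_nonneg (by positivity)]
    have : t / (t + l) ≤ 1 := by
      rw [div_le_one (by positivity)]; linarith
    nlinarith [Real.rpow_nonneg hl0.le (r-1), mul_le_of_le_one_right (Real.rpow_nonneg hl0.le (r-1)) this]
  have h2 : IntegrableOn (fun l : ℝ => l ^ (r-1) * (t / (t + l))) (Ioi 1) := by
    have hg : IntegrableOn (fun l : ℝ => t * l ^ (r-2)) (Ioi 1) :=
      (integrableOn_Ioi_rpow_of_lt (by linarith) one_pos).const_mul t
    refine Integrable.mono' hg (hmeas _ (Ioi_subset_Ioi one_pos.le) measurableSet_Ioi) ?_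
    filter_upwards [ae_restrict_mem measurableSet_Ioi] with l hl
    simp only [mem_Ioi] at hl
    have hl0 : 0 < l := one_pos.trans hl
    rw [Real.norm_eq_abs, abs_of_nonneg (by positivity)]
    have h3 : t / (t + l) ≤ t / l := by
      apply div_le_div_of_nonneg_left ht.le hl0; linarith
    have h4 : l ^ (r-1) * (t/l) = t * l ^ (r-2) := by
      rw [div_eq_mul_inv, ← Real.rpow_neg_one l]
      rw [show (r-2) = (r-1) + (-1) by ring, Real.rpow_add hl0]
      ring
    calc l ^ (r-1) * (t / (t+l)) ≤ l ^ (r-1) * (t/l) :=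
          mul_le_mul_of_nonneg_left h3 (Real.rpow_nonneg hl0.le _)
      _ = t * l ^ (r-2) := h4
  rw [← Ioc_union_Ioi_eq_Ioi (zero_le_one)]
  exact h1.union h2

lemma lh_rpow_eq (hr0 : 0 < r) (hr1 : r < 1) (t : ℝ) (ht : 0 ≤ t) :
    (∫ l in Ioi (0:ℝ), l ^ (r-1) * (t / (t + l))) = t ^ r * lhI r := by
  rcases eq_or_lt_of_le ht with h0 | ht
  · rw [← h0]; simp [Real.zero_rpow (ne_of_gt hr0)]
  have := MeasureTheory.integral_comp_mul_left_Ioi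
    (fun l : ℝ => l ^ (r-1) * (t / (t + l))) 0 ht
  rw [mul_zero] at this
  have key : ∀ x ∈ Ioi (0:ℝ), (t*x) ^ (r-1) * (t / (t + t*x)) = t ^ (r-1) * (x ^ (r-1) / (1+x)) := by
    intro x hx
    simp only [mem_Ioi] at hx
    rw [Real.mul_rpow ht.le hx.le]
    have h5 : t + t*x = t*(1+x) := by ring
    rw [h5]
    field_simp
  rw [setIntegral_congr_fun measurableSet_Ioi key, MeasureTheory.integral_const_mul] at this
  have h2 : t ^ (r-1) * lhI r
      = t⁻¹ * ∫ l in Ioi (0:ℝ), l ^ (r-1) * (t / (t + l)) := by simpa [lhI] using this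
  have h3 : (∫ l in Ioi (0:ℝ), l ^ (r-1) * (t / (t + l)))
      = t * (t ^ (r-1) * lhI r) := by
    rw [h2, ← mul_assoc, mul_inv_cancel₀ (ne_of_gt ht), one_mul]
  rw [h3, ← mul_assoc]
  congr 1
  rw [Real.rpow_sub ht, Real.rpow_one]
  field_simp

lemma lhI_pos (hr0 : 0 < r) (hr1 : r < 1) : 0 < lhI r := by
  have hint : IntegrableOn (fun l : ℝ => l ^ (r-1) / (1+l)) (Ioi 0) := by
    have := lh_integrable hr0 hr1 1 zero_le_one
    refine this.congr_fun (fun l hl => ?_) measurableSet_Ioi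
    simp [div_eq_mul_inv, one_div]
  rw [lhI]
  rw [setIntegral_pos_iff_support_of_nonneg_ae ?_ hint]
  · refine lt_of_lt_of_le ?_ (measure_mono (?_ : Ioi (1:ℝ) ⊆ _))
    · simp [Real.volume_Ioi]
    · intro l hl
      simp only [mem_Ioi] at hl
      have hl0 : (0:ℝ) < l := one_pos.trans hl
      constructor
      · simp only [Function.mem_support]
        positivity
      · exact mem_Ioi.mpr hl0
  · filter_upwards [ae_restrict_mem measurableSet_Ioi] with l hl
    simp only [mem_Ioi] at hl
    positivity

lemma lh_sum_rpow {m : ℕ} (hr0 : 0 < r) (hr1 : r < 1)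
    (α : Fin m → ℝ) (c : Fin m → ℝ) (hα : ∀ i, 0 ≤ α i) :
    ∑ i, c i * (α i) ^ r
      = (lhI r)⁻¹ * ∫ l in Ioi (0:ℝ), l ^ (r-1) * ∑ i, c i * (α i / (α i + l)) := by
  have hI : lhI r ≠ 0 := (lhI_pos hr0 hr1).ne'
  have hint : ∀ i : Fin m, IntegrableOn
      (fun l : ℝ => c i * (l ^ (r-1) * (α i / (α i + l)))) (Ioi 0) :=
    fun i => (lh_integrable hr0 hr1 (α i) (hα i)).const_mul _
  have hswap : (∫ l in Ioi (0:ℝ), l ^ (r-1) * ∑ i, c i * (α i / (α i + l)))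
      = ∑ i, c i * ∫ l in Ioi (0:ℝ), l ^ (r-1) * (α i / (α i + l)) := by
    calc (∫ l in Ioi (0:ℝ), l ^ (r-1) * ∑ i, c i * (α i / (α i + l)))
        = ∫ l in Ioi (0:ℝ), ∑ i, c i * (l ^ (r-1) * (α i / (α i + l))) := by
          refine setIntegral_congr_fun measurableSet_Ioi (fun l hl => ?_)
          rw [Finset.mul_sum]
          exact Finset.sum_congr rfl (fun i _ => by ring)
      _ = ∑ i, ∫ l in Ioi (0:ℝ), c i * (l ^ (r-1) * (α i / (α i + l))) :=
          MeasureTheory.integral_finset_sum _ (fun i _ => hint i)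
      _ = ∑ i, c i * ∫ l in Ioi (0:ℝ), l ^ (r-1) * (α i / (α i + l)) := by
          exact Finset.sum_congr rfl (fun i _ => MeasureTheory.integral_const_mul _ _)
  rw [hswap]
  rw [Finset.mul_sum]
  refine Finset.sum_congr rfl (fun i _ => ?_)
  rw [lh_rpow_eq hr0 hr1 (α i) (hα i)]
  field_simp

lemma lh_real_core {m k : ℕ} (hr0 : 0 < r) (hr1 : r < 1)
    (α : Fin m → ℝ) (c : Fin m → ℝ) (β : Fin k → ℝ) (b : Fin k → ℝ)
    (hα : ∀ i, 0 ≤ α i) (hβ : ∀ j, 0 ≤ β j)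
    (hsum : ∑ i, c i = ∑ j, b j)
    (hkey : ∀ l : ℝ, 0 < l → ∑ i, c i * (α i + l)⁻¹ ≤ ∑ j, b j * (β j + l)⁻¹) :
    ∑ j, b j * (β j) ^ r ≤ ∑ i, c i * (α i) ^ r := by
  rw [lh_sum_rpow hr0 hr1 α c hα, lh_sum_rpow hr0 hr1 β b hβ]
  have hI : (0:ℝ) < (lhI r)⁻¹ := inv_pos.mpr (lhI_pos hr0 hr1)
  refine mul_le_mul_of_nonneg_left ?_ hI.le
  have hintA : IntegrableOn (fun l : ℝ => l ^ (r-1) * ∑ i, c i * (α i / (α i + l))) (Ioi 0) := by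
    have : ∀ i : Fin m, IntegrableOn
        (fun l : ℝ => c i * (l ^ (r-1) * (α i / (α i + l)))) (Ioi 0) :=
      fun i => (lh_integrable hr0 hr1 (α i) (hα i)).const_mul _
    have := MeasureTheory.integral_finset_sum (μ := volume.restrict (Ioi 0)) Finset.univ
      (f := fun i l => c i * (l ^ (r-1) * (α i / (α i + l)))) (fun i _ => this i)
    refine (MeasureTheory.integrable_finset_sum (μ := volume.restrict (Ioi 0)) Finset.univ
      (f := fun i l => c i * (l ^ (r-1) * (α i / (α i + l)))) (fun i _ => ?_)).congr ?_
    · exact (lh_integrable hr0 hr1 (α i) (hα i)).const_mul _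
    · filter_upwards with l
      rw [Finset.mul_sum]
      exact Finset.sum_congr rfl (fun i _ => by ring)
  have hintB : IntegrableOn (fun l : ℝ => l ^ (r-1) * ∑ j, b j * (β j / (β j + l))) (Ioi 0) := by
    refine (MeasureTheory.integrable_finset_sum (μ := volume.restrict (Ioi 0)) Finset.univ
      (f := fun j l => b j * (l ^ (r-1) * (β j / (β j + l)))) (fun j _ => ?_)).congr ?_
    · exact (lh_integrable hr0 hr1 (β j) (hβ j)).const_mul _
    · filter_upwards with l
      rw [Finset.mul_sum]
      exact Finset.sum_congr rfl (fun j _ => by ring)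
  refine setIntegral_mono_on hintB hintA measurableSet_Ioi (fun l hl => ?_)
  simp only [mem_Ioi] at hl
  have hq : ∀ (t : ℝ), 0 ≤ t → t / (t + l) = 1 - l * (t + l)⁻¹ := by
    intro t ht
    have htl : t + l ≠ 0 := by positivity
    field_simp
    ring
  have hA : ∑ i, c i * (α i / (α i + l)) = (∑ i, c i) - l * ∑ i, c i * (α i + l)⁻¹ := by
    rw [Finset.mul_sum, ← Finset.sum_sub_distrib]
    refine Finset.sum_congr rfl (fun i _ => ?_)
    rw [hq _ (hα i)]; ring
  have hB : ∑ j, b j * (β j / (β j + l)) = (∑ j, b j) - l * ∑ j, b j * (β j + l)⁻¹ := by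
    rw [Finset.mul_sum, ← Finset.sum_sub_distrib]
    refine Finset.sum_congr rfl (fun j _ => ?_)
    rw [hq _ (hβ j)]; ring
  have hfin : ∑ j, b j * (β j / (β j + l)) ≤ ∑ i, c i * (α i / (α i + l)) := by
    rw [hA, hB, hsum]
    have := hkey l hl
    nlinarith
  exact mul_le_mul_of_nonneg_left hfin (Real.rpow_nonneg hl.le _)

open Matrix
open scoped ComplexOrder

/-- The `r`-th power of a Hermitian matrix, defined via the spectral decomposition. -/
noncomputable def hermPow {n : ℕ} {A : Matrix (Fin n) (Fin n) ℂ} (hA : A.IsHermitian)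
    (r : ℝ) : Matrix (Fin n) (Fin n) ℂ :=
  (hA.eigenvectorUnitary : Matrix (Fin n) (Fin n) ℂ) *
    Matrix.diagonal (fun i => ((hA.eigenvalues i ^ r : ℝ) : ℂ)) *
    star (hA.eigenvectorUnitary : Matrix (Fin n) (Fin n) ℂ)

variable {n : ℕ}

lemma lh_resolvent {M N P Q : Matrix (Fin n) (Fin n) ℂ}
    (hN : N.PosSemidef) (hMN : (M - N).PosSemidef) (hMherm : M.IsHermitian)
    (hMP : M * P = 1) (hPM : P * M = 1) (hNQ : N * Q = 1) (hQN : Q * N = 1) :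
    (Q - P).PosSemidef := by
  have hPh : Pᴴ = P := by
    have h1 : Pᴴ * M = 1 := by
      have := congrArg conjTranspose hMP
      rwa [conjTranspose_mul, conjTranspose_one, hMherm] at this
    calc Pᴴ = Pᴴ * (M * P) := by rw [hMP, mul_one]
      _ = (Pᴴ * M) * P := by rw [mul_assoc]
      _ = P := by rw [h1, one_mul]
  have hQh : Qᴴ = Q := by
    have h1 : Qᴴ * N = 1 := by
      have := congrArg conjTranspose hNQ
      rwa [conjTranspose_mul, conjTranspose_one, hN.1] at this
    calc Qᴴ = Qᴴ * (N * Q) := by rw [hNQ, mul_one]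
      _ = (Qᴴ * N) * Q := by rw [mul_assoc]
      _ = Q := by rw [h1, one_mul]
  have e1 : P * (N * Q) = P := by rw [hNQ, mul_one]
  have e2 : (Q * N) * P = P := by rw [hQN, one_mul]
  have e3 : Q * (N * Q) = Q := by rw [hNQ, mul_one]
  have e4 : (P * M) * P = P := by rw [hPM, one_mul]
  have key : Q - P = (P - Q)ᴴ * N * (P - Q) + Pᴴ * (M - N) * P := by
    rw [conjTranspose_sub, hPh, hQh]
    calc Q - P
        = (P*N*P - P*(N*Q) - (Q*N)*P + Q*(N*Q)) + ((P*M)*P - P*N*P) := by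
          rw [e1, e2, e3, e4]; noncomm_ring
      _ = (P - Q) * N * (P - Q) + P * (M - N) * P := by noncomm_ring
  rw [key]
  exact (hN.conjTranspose_mul_mul_same (P - Q)).add (hMN.conjTranspose_mul_mul_same P)

/-- Functional calculus of a Hermitian matrix through a real function. -/
noncomputable def lhFun {A : Matrix (Fin n) (Fin n) ℂ} (hA : A.IsHermitian) (g : ℝ → ℝ) :
    Matrix (Fin n) (Fin n) ℂ :=
  (hA.eigenvectorUnitary : Matrix (Fin n) (Fin n) ℂ) *
    Matrix.diagonal (fun i => ((g (hA.eigenvalues i) : ℝ) : ℂ)) *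
    star (hA.eigenvectorUnitary : Matrix (Fin n) (Fin n) ℂ)

lemma hermPow_eq_lhFun {A : Matrix (Fin n) (Fin n) ℂ} (hA : A.IsHermitian) (r : ℝ) :
    hermPow hA r = lhFun hA (fun t => t ^ r) := rfl

section lhFun
variable {A : Matrix (Fin n) (Fin n) ℂ} (hA : A.IsHermitian)

lemma lhFun_congr {g h : ℝ → ℝ} (hg : ∀ i, g (hA.eigenvalues i) = h (hA.eigenvalues i)) :
    lhFun hA g = lhFun hA h := by
  have he : (fun i => ((g (hA.eigenvalues i) : ℝ) : ℂ)) = fun i => ((h (hA.eigenvalues i) : ℝ) : ℂ) :=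
    funext fun i => by rw [hg i]
  unfold lhFun
  rw [he]

lemma lhFun_mul (g h : ℝ → ℝ) :
    lhFun hA g * lhFun hA h = lhFun hA (fun t => g t * h t) := by
  unfold lhFun
  set U := (hA.eigenvectorUnitary : Matrix (Fin n) (Fin n) ℂ)
  have hU : star U * U = 1 := Unitary.coe_star_mul_self hA.eigenvectorUnitary
  calc U * diagonal (fun i => ((g (hA.eigenvalues i) : ℝ) : ℂ)) * star U *
        (U * diagonal (fun i => ((h (hA.eigenvalues i) : ℝ) : ℂ)) * star U)
      = U * diagonal (fun i => ((g (hA.eigenvalues i) : ℝ) : ℂ)) * (star U * U) *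
        diagonal (fun i => ((h (hA.eigenvalues i) : ℝ) : ℂ)) * star U := by
        simp only [mul_assoc]
    _ = U * (diagonal (fun i => ((g (hA.eigenvalues i) : ℝ) : ℂ)) *
        diagonal (fun i => ((h (hA.eigenvalues i) : ℝ) : ℂ))) * star U := by
        rw [hU]; simp only [mul_one, mul_assoc]
    _ = U * diagonal (fun i => ((g (hA.eigenvalues i) * h (hA.eigenvalues i) : ℝ) : ℂ)) * star U := by
        rw [diagonal_mul_diagonal]
        push_cast
        rfl

lemma lhFun_one : lhFun hA (fun _ => 1) = 1 := by
  unfold lhFun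
  have hU : (hA.eigenvectorUnitary : Matrix (Fin n) (Fin n) ℂ) *
      star (hA.eigenvectorUnitary : Matrix (Fin n) (Fin n) ℂ) = 1 :=
    Unitary.coe_mul_star_self hA.eigenvectorUnitary
  simp [hU]

lemma lhFun_isHermitian (g : ℝ → ℝ) : (lhFun hA g).IsHermitian := by
  have hd : (diagonal (fun i => ((g (hA.eigenvalues i) : ℝ) : ℂ)))ᴴ
      = diagonal (fun i => ((g (hA.eigenvalues i) : ℝ) : ℂ)) := by
    rw [diagonal_conjTranspose]
    have hs : (star fun i => ((g (hA.eigenvalues i) : ℝ) : ℂ))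
        = fun i => ((g (hA.eigenvalues i) : ℝ) : ℂ) := by
      funext i
      exact Complex.conj_ofReal _
    rw [hs]
  unfold lhFun Matrix.IsHermitian
  rw [star_eq_conjTranspose, conjTranspose_mul, conjTranspose_mul, hd,
    conjTranspose_conjTranspose, mul_assoc]

lemma lhFun_id : lhFun hA (fun t => t) = A := by
  conv_rhs => rw [hA.spectral_theorem]
  rfl

lemma lhFun_form (g : ℝ → ℝ) (x : Fin n → ℂ) :
    star x ⬝ᵥ (lhFun hA g) *ᵥ x =
      ((∑ i, g (hA.eigenvalues i) *
        Complex.normSq ((star (hA.eigenvectorUnitary : Matrix (Fin n) (Fin n) ℂ) *ᵥ x) i) : ℝ) : ℂ) := by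
  set U := (hA.eigenvectorUnitary : Matrix (Fin n) (Fin n) ℂ)
  set y := star U *ᵥ x with hy
  have hsy : star y = star x ᵥ* U := by
    rw [hy, star_mulVec, star_eq_conjTranspose, conjTranspose_conjTranspose]
  calc star x ⬝ᵥ (U * diagonal (fun i => ((g (hA.eigenvalues i) : ℝ) : ℂ)) * star U) *ᵥ x
      = star x ⬝ᵥ U *ᵥ (diagonal (fun i => ((g (hA.eigenvalues i) : ℝ) : ℂ)) *ᵥ y) := by
        rw [hy, mulVec_mulVec, mulVec_mulVec]
    _ = (star x ᵥ* U) ⬝ᵥ (diagonal (fun i => ((g (hA.eigenvalues i) : ℝ) : ℂ)) *ᵥ y) := by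
        rw [dotProduct_mulVec]
    _ = ∑ i, starRingEnd ℂ (y i) * (((g (hA.eigenvalues i) : ℝ) : ℂ) * y i) := by
        rw [← hsy]
        simp [dotProduct, mulVec_diagonal]
    _ = ((∑ i, g (hA.eigenvalues i) * Complex.normSq (y i) : ℝ) : ℂ) := by
        push_cast
        refine Finset.sum_congr rfl (fun i _ => ?_)
        rw [Complex.normSq_eq_conj_mul_self]
        ring

lemma lhFun_const (l : ℝ) : lhFun hA (fun _ => l) = (l : ℂ) • 1 := by
  have hd : diagonal (fun _ : Fin n => ((l : ℝ) : ℂ)) = (l : ℂ) • 1 :=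
    (Matrix.smul_one_eq_diagonal _).symm
  unfold lhFun
  rw [hd, Matrix.mul_smul, Matrix.smul_mul]
  congr 1
  rw [mul_one]
  exact Unitary.coe_mul_star_self hA.eigenvectorUnitary

lemma lhFun_add_smul_one (l : ℝ) :
    lhFun hA (fun t => t + l) = A + (l : ℂ) • 1 := by
  have he : Matrix.diagonal (fun i => (((hA.eigenvalues i + l : ℝ)) : ℂ))
      = Matrix.diagonal (fun i => ((hA.eigenvalues i : ℝ) : ℂ)) + Matrix.diagonal (fun _ => ((l : ℝ) : ℂ)) := by
    rw [Matrix.diagonal_add]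
    congr 1
    funext i
    push_cast
    rfl
  have h1 : lhFun hA (fun t => t + l) = lhFun hA (fun t => t) + lhFun hA (fun _ => l) := by
    unfold lhFun
    rw [he, mul_add, add_mul]
  rw [h1, lhFun_id, lhFun_const]

end lhFun

lemma lh_key_ineq {A B : Matrix (Fin n) (Fin n) ℂ}
    (hA : A.PosSemidef) (hB : B.PosSemidef) (hAB : (A - B).PosSemidef)
    (x : Fin n → ℂ) (l : ℝ) (hl : 0 < l) :
    ∑ i, Complex.normSq ((star (hA.1.eigenvectorUnitary : Matrix (Fin n) (Fin n) ℂ) *ᵥ x) i)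
        * (hA.1.eigenvalues i + l)⁻¹
      ≤ ∑ j, Complex.normSq ((star (hB.1.eigenvectorUnitary : Matrix (Fin n) (Fin n) ℂ) *ᵥ x) j)
        * (hB.1.eigenvalues j + l)⁻¹ := by
  set P := lhFun hA.1 (fun t => (t + l)⁻¹) with hPdef
  set Q := lhFun hB.1 (fun t => (t + l)⁻¹) with hQdef
  set M := lhFun hA.1 (fun t => t + l) with hMdef
  set N := lhFun hB.1 (fun t => t + l) with hNdef
  have hApos : ∀ i, (hA.1.eigenvalues i + l) ≠ 0 := by
    intro i
    have := hA.eigenvalues_nonneg i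
    positivity
  have hBpos : ∀ j, (hB.1.eigenvalues j + l) ≠ 0 := by
    intro j
    have := hB.eigenvalues_nonneg j
    positivity
  have hMP : M * P = 1 := by
    rw [hMdef, hPdef, lhFun_mul]
    rw [lhFun_congr (h := fun _ => (1:ℝ)) hA.1 (fun i => mul_inv_cancel₀ (hApos i))]
    exact lhFun_one hA.1
  have hPM : P * M = 1 := by
    rw [hMdef, hPdef, lhFun_mul]
    rw [lhFun_congr (h := fun _ => (1:ℝ)) hA.1 (fun i => inv_mul_cancel₀ (hApos i))]
    exact lhFun_one hA.1
  have hNQ : N * Q = 1 := by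
    rw [hNdef, hQdef, lhFun_mul]
    rw [lhFun_congr (h := fun _ => (1:ℝ)) hB.1 (fun i => mul_inv_cancel₀ (hBpos i))]
    exact lhFun_one hB.1
  have hQN : Q * N = 1 := by
    rw [hNdef, hQdef, lhFun_mul]
    rw [lhFun_congr (h := fun _ => (1:ℝ)) hB.1 (fun i => inv_mul_cancel₀ (hBpos i))]
    exact lhFun_one hB.1
  have hsmul : ((l : ℂ) • (1 : Matrix (Fin n) (Fin n) ℂ)).PosSemidef := by
    rw [Matrix.smul_one_eq_diagonal]
    exact Matrix.PosSemidef.diagonal (fun _ => Complex.zero_le_real.mpr hl.le)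
  have hN : N.PosSemidef := by
    rw [hNdef, lhFun_add_smul_one]
    exact hB.add hsmul
  have hMN : (M - N).PosSemidef := by
    have : M - N = A - B := by
      rw [hMdef, hNdef, lhFun_add_smul_one, lhFun_add_smul_one]
      abel
    rw [this]
    exact hAB
  have hres := lh_resolvent hN hMN (lhFun_isHermitian hA.1 _) hMP hPM hNQ hQN
  have h2 := hres.dotProduct_mulVec_nonneg x
  rw [sub_mulVec, dotProduct_sub, hQdef, hPdef, lhFun_form, lhFun_form] at h2
  rw [← Complex.ofReal_sub, Complex.zero_le_real, sub_nonneg] at h2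
  calc ∑ i, Complex.normSq ((star (hA.1.eigenvectorUnitary : Matrix (Fin n) (Fin n) ℂ) *ᵥ x) i)
        * (hA.1.eigenvalues i + l)⁻¹
      = ∑ i, (hA.1.eigenvalues i + l)⁻¹ *
        Complex.normSq ((star (hA.1.eigenvectorUnitary : Matrix (Fin n) (Fin n) ℂ) *ᵥ x) i) :=
        Finset.sum_congr rfl (fun i _ => mul_comm _ _)
    _ ≤ ∑ j, (hB.1.eigenvalues j + l)⁻¹ *
        Complex.normSq ((star (hB.1.eigenvectorUnitary : Matrix (Fin n) (Fin n) ℂ) *ᵥ x) j) := h2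
    _ = ∑ j, Complex.normSq ((star (hB.1.eigenvectorUnitary : Matrix (Fin n) (Fin n) ℂ) *ᵥ x) j)
        * (hB.1.eigenvalues j + l)⁻¹ :=
        Finset.sum_congr rfl (fun j _ => mul_comm _ _)

theorem loewner_heinz (n : ℕ) (A B : Matrix (Fin n) (Fin n) ℂ)
    (hA : A.PosSemidef) (hB : B.PosSemidef) (hAB : (A - B).PosSemidef)
    (r : ℝ) (hr0 : 0 ≤ r) (hr1 : r ≤ 1) :
    (hermPow hA.1 r - hermPow hB.1 r).PosSemidef := by
  rcases eq_or_lt_of_le hr0 with h0 | hr0'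
  · have hPA : hermPow hA.1 r = 1 := by
      rw [hermPow_eq_lhFun, lhFun_congr (h := fun _ => (1:ℝ)) hA.1 (fun i => by rw [← h0, Real.rpow_zero])]
      exact lhFun_one hA.1
    have hPB : hermPow hB.1 r = 1 := by
      rw [hermPow_eq_lhFun, lhFun_congr (h := fun _ => (1:ℝ)) hB.1 (fun i => by rw [← h0, Real.rpow_zero])]
      exact lhFun_one hB.1
    rw [hPA, hPB, sub_self]
    exact Matrix.PosSemidef.zero
  rcases eq_or_lt_of_le hr1 with h1 | hr1'
  · have hPA : hermPow hA.1 r = A := by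
      rw [hermPow_eq_lhFun, lhFun_congr (h := fun t => t) hA.1 (fun i => by rw [h1, Real.rpow_one])]
      exact lhFun_id hA.1
    have hPB : hermPow hB.1 r = B := by
      rw [hermPow_eq_lhFun, lhFun_congr (h := fun t => t) hB.1 (fun i => by rw [h1, Real.rpow_one])]
      exact lhFun_id hB.1
    rw [hPA, hPB]
    exact hAB
  rw [hermPow_eq_lhFun hA.1 r, hermPow_eq_lhFun hB.1 r]
  refine Matrix.PosSemidef.of_dotProduct_mulVec_nonneg ((lhFun_isHermitian hA.1 _).sub (lhFun_isHermitian hB.1 _)) fun x => ?_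
  set UA := (hA.1.eigenvectorUnitary : Matrix (Fin n) (Fin n) ℂ)
  set UB := (hB.1.eigenvectorUnitary : Matrix (Fin n) (Fin n) ℂ)
  set c : Fin n → ℝ := fun i => Complex.normSq ((star UA *ᵥ x) i) with hc
  set b : Fin n → ℝ := fun j => Complex.normSq ((star UB *ᵥ x) j) with hb
  have hform : star x ⬝ᵥ (lhFun hA.1 (fun t => t ^ r) - lhFun hB.1 (fun t => t ^ r)) *ᵥ x
      = (((∑ i, hA.1.eigenvalues i ^ r * c i) - ∑ j, hB.1.eigenvalues j ^ r * b j : ℝ) : ℂ) := by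
    rw [sub_mulVec, dotProduct_sub, lhFun_form, lhFun_form, ← Complex.ofReal_sub]
  rw [hform, Complex.zero_le_real, sub_nonneg]
  have hsum : ∑ i, c i = ∑ j, b j := by
    have h1 : ((∑ i, (1:ℝ) * c i : ℝ) : ℂ) = star x ⬝ᵥ (1 : Matrix (Fin n) (Fin n) ℂ) *ᵥ x := by
      rw [← lhFun_one hA.1, lhFun_form]
    have h2 : ((∑ j, (1:ℝ) * b j : ℝ) : ℂ) = star x ⬝ᵥ (1 : Matrix (Fin n) (Fin n) ℂ) *ᵥ x := by
      rw [← lhFun_one hB.1, lhFun_form]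
    have := Complex.ofReal_inj.mp (h1.trans h2.symm)
    simpa using this
  have hkey : ∀ l : ℝ, 0 < l →
      ∑ i, c i * (hA.1.eigenvalues i + l)⁻¹ ≤ ∑ j, b j * (hB.1.eigenvalues j + l)⁻¹ :=
    fun l hl => lh_key_ineq hA hB hAB x l hl
  have hcore := lh_real_core hr0' hr1' (hA.1.eigenvalues) c (hB.1.eigenvalues) b
    (fun i => hA.eigenvalues_nonneg i) (fun j => hB.eigenvalues_nonneg j) hsum hkey
  calc ∑ j, hB.1.eigenvalues j ^ r * b j
      = ∑ j, b j * hB.1.eigenvalues j ^ r := Finset.sum_congr rfl (fun j _ => mul_comm _ _)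
    _ ≤ ∑ i, c i * hA.1.eigenvalues i ^ r := hcore
    _ = ∑ i, hA.1.eigenvalues i ^ r * c i := Finset.sum_congr rfl (fun i _ => mul_comm _ _)
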